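/- If the directed graph 𝒢_g is strongly connected, then the map G_g is regular on (X, d): the set of periodic points of G_g is dense in X. -/

import Mathlib

def hamB {N : ℕ} (x y : Fin N → Bool) : ℕ :=
  (Finset.univ.filter fun i => x i ≠ y i).card

noncomputable def dE {N : ℕ} (x y : Fin N → Bool) : ℝ := hamB x y

noncomputable def dM {N : ℕ} (m m' : ℕ → Fin N → Bool) : ℝ :=
  (9 / (N : ℝ)) * ∑' k : ℕ, (hamB (m k) (m' k) : ℝ) / 10 ^ (k + 1)

noncomputable def dX {N : ℕ} (p q : (Fin N → Bool) × (ℕ → Fin N → Bool)) : ℝ :=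
  dE p.1 q.1 + dM p.2 q.2

def Gmap {N : ℕ} (g : (Fin N → Bool) → (Fin N → Bool) → (Fin N → Bool))
    (p : (Fin N → Bool) × (ℕ → Fin N → Bool)) : (Fin N → Bool) × (ℕ → Fin N → Bool) :=
  (g (p.2 0) p.1, fun k => p.2 (k + 1))


/-- End vertex of the path starting at `x` and following the edge labels in `L`
in the graph `𝒢_g` (an edge labeled `m` goes from `v` to `g m v`). -/
def pathEnd {N : ℕ} (g : (Fin N → Bool) → (Fin N → Bool) → (Fin N → Bool))
    (x : Fin N → Bool) (L : List (Fin N → Bool)) : Fin N → Bool :=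
  L.foldl (fun v m => g m v) x

lemma hamB_self {N : ℕ} (x : Fin N → Bool) : hamB x x = 0 := by
  simp [hamB]

lemma hamB_le {N : ℕ} (x y : Fin N → Bool) : hamB x y ≤ N := by
  simpa [hamB] using (Finset.card_filter_le Finset.univ fun i => x i ≠ y i)

lemma iterate_Gmap {N : ℕ} (g : (Fin N → Bool) → (Fin N → Bool) → (Fin N → Bool)) :
    ∀ (n : ℕ) (p : (Fin N → Bool) × (ℕ → Fin N → Bool)),
      (Gmap g)^[n] p =
        (pathEnd g p.1 (List.ofFn fun i : Fin n => p.2 i), fun k => p.2 (k + n)) := by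
  intro n
  induction n with
  | zero => intro p; simp [pathEnd]
  | succ n ih =>
    intro p
    rw [Function.iterate_succ_apply, ih]
    simp only [Prod.mk.injEq]
    refine ⟨?_, ?_⟩
    · simp [Gmap, pathEnd, List.ofFn_succ, Fin.val_succ]
    · funext k
      simp only [Gmap]
      congr 1

/-- if `𝒢_g` is strongly connected then `G_g` is regular:
periodic points are dense in `(X,d)`. -/
theorem regular_of_strongly_connected (N : ℕ) (hN : 1 ≤ N)
    (g : (Fin N → Bool) → (Fin N → Bool) → (Fin N → Bool))
    (hsc : ∀ x y : Fin N → Bool, ∃ L : List (Fin N → Bool), pathEnd g x L = y) :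
    ∀ p : (Fin N → Bool) × (ℕ → Fin N → Bool), ∀ ε > (0 : ℝ),
      ∃ q, dX p q < ε ∧ ∃ n ≥ 1, (Gmap g)^[n] q = q := by
  intro p ε hε
  obtain ⟨x, m⟩ := p
  -- choose K with (1/10)^K < ε and K ≥ 1
  obtain ⟨K0, hK0⟩ := exists_pow_lt_of_lt_one hε (by norm_num : (1/10 : ℝ) < 1)
  set K := K0 + 1 with hKdef
  have hKε : ((1:ℝ)/10)^K < ε := by
    calc ((1:ℝ)/10)^K ≤ (1/10)^K0 := by
          apply pow_le_pow_of_le_one (by norm_num) (by norm_num)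
          omega
      _ < ε := hK0
  -- build the periodic word
  set P : List (Fin N → Bool) := List.ofFn (fun i : Fin K => m i) with hP
  obtain ⟨L, hL⟩ := hsc (pathEnd g x P) x
  set W : List (Fin N → Bool) := P ++ L with hW
  set n := W.length with hnW
  have hKn : K ≤ n := by simp [hnW, hW, hP]; omega
  have hn : 0 < n := by omega
  set m' : ℕ → Fin N → Bool := fun k => W.getD (k % n) x with hm'
  refine ⟨(x, m'), ?_, n, by omega, ?_⟩
  · -- distance bound
    have hagree : ∀ k < K, m' k = m k := by
      intro k hk
      have h1 : k % n = k := Nat.mod_eq_of_lt (lt_of_lt_of_le hk hKn)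
      have h2 : k < P.length := by simp [hP, hk]; omega
      rw [hm']
      simp only [h1, hW, List.getD_append _ _ _ _ h2]
      rw [List.getD_eq_getElem _ _ h2]
      simp only [hP, List.getElem_ofFn]
    have hNpos : (0:ℝ) < N := by exact_mod_cast hN
    set f : ℕ → ℝ := fun k => (hamB (m k) (m' k) : ℝ) / 10 ^ (k + 1) with hf
    have hfnonneg : ∀ k, 0 ≤ f k := fun k => by positivity
    have hfle : ∀ k, f k ≤ (N:ℝ) * (1/10)^(k+1) := by
      intro k
      have h10 : ((1:ℝ)/10)^(k+1) = 1/10^(k+1) := by rw [div_pow, one_pow]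
      simp only [hf, h10, mul_one_div]
      gcongr
      exact_mod_cast hamB_le (m k) (m' k)
    have hgsum : Summable (fun k : ℕ => (N:ℝ) * (1/10)^(k+1)) := by
      apply Summable.mul_left
      exact (summable_geometric_of_lt_one (by norm_num) (by norm_num)).comp_injective
        (add_left_injective 1)
    have hfsum : Summable f := Summable.of_nonneg_of_le hfnonneg hfle hgsum
    have hzero : ∀ k < K, f k = 0 := by
      intro k hk
      simp [hf, hagree k hk, hamB_self]
    have htail : ∑' k, f k = ∑' k, f (k + K) := by
      rw [← Summable.sum_add_tsum_nat_add K hfsum]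
      rw [Finset.sum_eq_zero fun k hk => hzero k (Finset.mem_range.mp hk)]
      ring
    have hbound : ∑' k, f k ≤ (N:ℝ) * (1/10)^K / 9 := by
      rw [htail]
      have h1 : ∑' k : ℕ, (N:ℝ) * (1/10)^(k + K + 1) = (N:ℝ) * (1/10)^K / 9 := by
        have : ∀ k : ℕ, (N:ℝ) * (1/10)^(k + K + 1)
            = ((N:ℝ) * (1/10)^K * (1/10)) * (1/10)^k := by
          intro k; ring
        rw [tsum_congr this, tsum_mul_left,
          tsum_geometric_of_lt_one (by norm_num) (by norm_num)]
        ring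
      have hgsum2 : Summable (fun k : ℕ => (N:ℝ) * (1/10)^(k + K + 1)) := by
        refine ((summable_geometric_of_lt_one (by norm_num) (by norm_num :
          (1/10:ℝ) < 1)).mul_left ((N:ℝ) * (1/10)^(K+1))).congr fun k => ?_
        rw [show k + K + 1 = (K + 1) + k by omega, pow_add]
        ring
      calc ∑' k, f (k + K) ≤ ∑' k : ℕ, (N:ℝ) * (1/10)^(k + K + 1) := by
            exact Summable.tsum_le_tsum (fun k => hfle (k + K))
              (hfsum.comp_injective (add_left_injective K)) hgsum2
        _ = (N:ℝ) * (1/10)^K / 9 := h1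
    have hdM : dM m m' ≤ (1/10:ℝ)^K := by
      rw [dM]
      calc (9 / (N:ℝ)) * ∑' k, f k ≤ (9 / (N:ℝ)) * ((N:ℝ) * (1/10)^K / 9) := by
            apply mul_le_mul_of_nonneg_left hbound (by positivity)
        _ = (1/10:ℝ)^K := by field_simp
    have : dX (x, m) (x, m') = dM m m' := by
      simp [dX, dE, hamB_self]
    rw [this]
    exact lt_of_le_of_lt hdM hKε
  · -- periodicity
    rw [iterate_Gmap]
    have hofn : (List.ofFn fun i : Fin n => m' i) = W := by
      apply List.ext_getElem (by simp [hnW])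
      intro i h1 h2
      have hi : i < n := by simpa [hnW] using h2
      simp only [List.getElem_ofFn, hm']
      show W.getD (i % n) x = W[i]
      rw [Nat.mod_eq_of_lt hi, List.getD_eq_getElem _ _ h2]
    have hshift : (fun k => m' (k + n)) = m' := by
      funext k
      simp [hm', Nat.add_mod_right]
    simp only [hofn, hshift]
    have hpath : pathEnd g x W = x := by
      rw [hW]
      show pathEnd g x (P ++ L) = x
      rw [pathEnd, List.foldl_append, ← pathEnd, ← pathEnd, hL]
    rw [hpath]
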